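/- Let (V,E) be a finite connected graph with valency bounded by K ≥ 1 and m a full-support measure on V satisfying: for some c' > 0 and p ∈ [1,∞), for every f: V → ℂ, Σ_{u~v} |f(u)−f(v)|^p (m(u)+m(v)) ≥ c' Σ_{u,v∈V} |f(u)−f(v)|^p m(u)m(v)/m(V) (the L^p-Poincaré inequality), and s·m(u) ≤ m(v) ≤ m(u)/s for adjacent u,v (s ∈ (0,1)). Then for every L-Lipschitz map f from (V, edge-path metric) to an L^p-space, Σ_{u,v∈V} ‖f(u)−f(v)‖^p m(u)m(v)/m(V)² ≤ ((1+s)·K·L^p)/(s·c'). -/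

import Mathlib

open scoped Classical
open Finset

/-- from the L^p-Poincaré inequality, Lipschitz maps into an L^p-space
have uniformly bounded mean p-th displacement. -/
theorem stmt11 {V : Type*} [Fintype V] (G : SimpleGraph V) (hconn : G.Connected)
    (K : ℕ) (hK : 1 ≤ K) (hdeg : ∀ v, (univ.filter (fun u => G.Adj v u)).card ≤ K)
    (m : V → ℝ) (hm : ∀ v, 0 < m v)
    (s : ℝ) (hs : s ∈ Set.Ioo (0:ℝ) 1)
    (hratio : ∀ u v, G.Adj u v → s * m u ≤ m v ∧ m v ≤ m u / s)
    (p : ℝ) (hp : 1 ≤ p) (c' : ℝ) (hc' : 0 < c')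
    (hPoincare : ∀ g : V → ℂ,
      c' * ∑ u, ∑ v, ‖g u - g v‖ ^ p * (m u * m v) / (∑ w, m w) ≤
        ∑ u, ∑ v, if G.Adj u v then ‖g u - g v‖ ^ p * (m u + m v) else 0)
    {Z : Type*} [MeasurableSpace Z] (ν : MeasureTheory.Measure Z)
    (f : V → MeasureTheory.Lp ℂ (ENNReal.ofReal p) ν)
    (L : ℝ) (hL : 0 < L)
    (hLip : ∀ u v, ‖f u - f v‖ ≤ L * (G.dist u v : ℝ)) :
    ∑ u, ∑ v, ‖f u - f v‖ ^ p * (m u * m v) / (∑ w, m w) ^ 2 ≤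
      (1 + s) * K * L ^ p / (s * c') := by
  classical
  obtain ⟨hs0, hs1⟩ := hs
  have hp0 : 0 < p := lt_of_lt_of_le one_pos hp
  have : Nonempty V := hconn.nonempty
  set M : ℝ := ∑ w, m w with hMdef
  have hMpos : 0 < M := Finset.sum_pos (fun w _ => hm w) univ_nonempty
  have hP0 : ENNReal.ofReal p ≠ 0 := by
    simp only [ne_eq, ENNReal.ofReal_eq_zero, not_le]; exact hp0
  have hPtop : ENNReal.ofReal p ≠ ⊤ := ENNReal.ofReal_ne_top
  have hPtoReal : (ENNReal.ofReal p).toReal = p := ENNReal.toReal_ofReal hp0.le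
  -- key facts about Lp norms
  have hInt : ∀ h : MeasureTheory.Lp ℂ (ENNReal.ofReal p) ν,
      MeasureTheory.Integrable (fun z => ‖h z‖ ^ p) ν := by
    intro h
    have := (MeasureTheory.Lp.memLp h).integrable_norm_rpow hP0 hPtop
    rwa [hPtoReal] at this
  have hnormpow : ∀ h : MeasureTheory.Lp ℂ (ENNReal.ofReal p) ν,
      ‖h‖ ^ p = ∫ z, ‖h z‖ ^ p ∂ν := by
    intro h
    have hmem := MeasureTheory.Lp.memLp h
    have heq := hmem.eLpNorm_eq_integral_rpow_norm hP0 hPtop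
    rw [MeasureTheory.Lp.norm_def, heq, hPtoReal,
      ENNReal.toReal_ofReal (Real.rpow_nonneg
        (MeasureTheory.integral_nonneg fun z => Real.rpow_nonneg (norm_nonneg _) p) _)]
    exact Real.rpow_inv_rpow
      (MeasureTheory.integral_nonneg fun z => Real.rpow_nonneg (norm_nonneg _) p) hp0.ne'
  -- the two sides of the integrated Poincaré inequality
  set A : ℝ := ∑ u, ∑ v, ‖f u - f v‖ ^ p * (m u * m v) / M with hAdef
  set B : ℝ := ∑ u, ∑ v, if G.Adj u v then ‖f u - f v‖ ^ p * (m u + m v) else 0 with hBdef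
  have hAnonneg : 0 ≤ A := by
    apply Finset.sum_nonneg; intro u _; apply Finset.sum_nonneg; intro v _
    have hn : (0:ℝ) ≤ ‖f u - f v‖ := by
      rw [MeasureTheory.Lp.norm_def]; exact ENNReal.toReal_nonneg
    have hpn : (0:ℝ) ≤ ‖f u - f v‖ ^ p := Real.rpow_nonneg hn p
    exact div_nonneg (mul_nonneg hpn (mul_nonneg (hm u).le (hm v).le)) hMpos.le
  -- integrated Poincaré : c' * A ≤ B
  have hmain : c' * A ≤ B := by
    set φ : Z → ℝ := fun z =>
      c' * ∑ u, ∑ v, ‖(f u - f v : MeasureTheory.Lp ℂ (ENNReal.ofReal p) ν) z‖ ^ p * (m u * m v) / M with hφdef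
    set ψ : Z → ℝ := fun z =>
      ∑ u, ∑ v, if G.Adj u v then
        ‖(f u - f v : MeasureTheory.Lp ℂ (ENNReal.ofReal p) ν) z‖ ^ p * (m u + m v) else 0 with hψdef
    have hIntTerm : ∀ u v : V, MeasureTheory.Integrable
        (fun z => ‖(f u - f v : MeasureTheory.Lp ℂ (ENNReal.ofReal p) ν) z‖ ^ p) ν := fun u v => hInt _
    have hφint : MeasureTheory.Integrable φ ν := by
      apply MeasureTheory.Integrable.const_mul
      apply MeasureTheory.integrable_finset_sum
      intro u _
      apply MeasureTheory.integrable_finset_sum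
      intro v _
      exact ((hIntTerm u v).mul_const _).div_const _
    have hψint : MeasureTheory.Integrable ψ ν := by
      apply MeasureTheory.integrable_finset_sum
      intro u _
      apply MeasureTheory.integrable_finset_sum
      intro v _
      by_cases h : G.Adj u v
      · simpa [h] using (hIntTerm u v).mul_const (m u + m v)
      · simp [h]
    have hae : ∀ᵐ z ∂ν, φ z ≤ ψ z := by
      have hsub : ∀ᵐ z ∂ν, ∀ u v : V,
          (f u - f v : MeasureTheory.Lp ℂ (ENNReal.ofReal p) ν) z = f u z - f v z := by
        rw [MeasureTheory.ae_all_iff]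
        intro u
        rw [MeasureTheory.ae_all_iff]
        intro v
        exact MeasureTheory.Lp.coeFn_sub (f u) (f v)
      filter_upwards [hsub] with z hz
      have := hPoincare (fun u => f u z)
      simp only [hφdef, hψdef]
      calc c' * ∑ u, ∑ v, ‖(f u - f v : MeasureTheory.Lp ℂ (ENNReal.ofReal p) ν) z‖ ^ p * (m u * m v) / M
          = c' * ∑ u, ∑ v, ‖f u z - f v z‖ ^ p * (m u * m v) / M := by
            congr 1; apply Finset.sum_congr rfl; intro u _
            apply Finset.sum_congr rfl; intro v _; rw [hz u v]
        _ ≤ ∑ u, ∑ v, if G.Adj u v then ‖f u z - f v z‖ ^ p * (m u + m v) else 0 := this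
        _ = ∑ u, ∑ v, if G.Adj u v then
              ‖(f u - f v : MeasureTheory.Lp ℂ (ENNReal.ofReal p) ν) z‖ ^ p * (m u + m v) else 0 := by
            apply Finset.sum_congr rfl; intro u _
            apply Finset.sum_congr rfl; intro v _; rw [hz u v]
    have hstep : ∫ z, φ z ∂ν ≤ ∫ z, ψ z ∂ν :=
      MeasureTheory.integral_mono_ae hφint hψint hae
    have hφeq : ∫ z, φ z ∂ν = c' * A := by
      rw [hφdef]
      rw [MeasureTheory.integral_const_mul]
      congr 1
      rw [MeasureTheory.integral_finset_sum _ (fun u _ =>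
        MeasureTheory.integrable_finset_sum _ (fun v _ =>
          ((hIntTerm u v).mul_const _).div_const _))]
      apply Finset.sum_congr rfl; intro u _
      rw [MeasureTheory.integral_finset_sum _ (fun v _ =>
        ((hIntTerm u v).mul_const _).div_const _)]
      apply Finset.sum_congr rfl; intro v _
      rw [hnormpow (f u - f v)]
      rw [MeasureTheory.integral_div, MeasureTheory.integral_mul_const]
    have hψeq : ∫ z, ψ z ∂ν = B := by
      rw [hψdef]
      rw [MeasureTheory.integral_finset_sum _ (fun u _ =>
        MeasureTheory.integrable_finset_sum _ (fun v _ => by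
          by_cases h : G.Adj u v
          · simpa [h] using (hIntTerm u v).mul_const (m u + m v)
          · simp [h]))]
      apply Finset.sum_congr rfl; intro u _
      rw [MeasureTheory.integral_finset_sum _ (fun v _ => by
        by_cases h : G.Adj u v
        · simpa [h] using (hIntTerm u v).mul_const (m u + m v)
        · simp [h])]
      apply Finset.sum_congr rfl; intro v _
      by_cases h : G.Adj u v
      · simp only [h, if_true]
        rw [hnormpow (f u - f v), MeasureTheory.integral_mul_const]
      · simp [h]
    rw [← hφeq, ← hψeq]; exact hstep
  -- bound B
  have hB : B ≤ (1 + s) / s * K * L ^ p * M := by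
    have hterm : ∀ u v : V, (if G.Adj u v then ‖f u - f v‖ ^ p * (m u + m v) else 0) ≤
        (if G.Adj u v then L ^ p * ((1 + s) / s * m u) else 0) := by
      intro u v
      by_cases h : G.Adj u v
      · simp only [h, if_true]
        have hd : G.dist u v = 1 := (SimpleGraph.dist_eq_one_iff_adj).2 h
        have h1 : ‖f u - f v‖ ≤ L := by
          have hl := hLip u v; rw [hd] at hl; simpa using hl
        have hn : (0:ℝ) ≤ ‖f u - f v‖ := by
          rw [MeasureTheory.Lp.norm_def]; exact ENNReal.toReal_nonneg
        have h2 : ‖f u - f v‖ ^ p ≤ L ^ p := Real.rpow_le_rpow hn h1 hp0.le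
        have h3 : m u + m v ≤ (1 + s) / s * m u := by
          have hmv := (hratio u v h).2
          rw [div_eq_mul_inv, add_mul, one_mul, mul_inv_cancel₀ hs0.ne']
          rw [div_eq_inv_mul] at hmv
          nlinarith [hm u, hm v]
        have h4 : (0:ℝ) ≤ m u + m v := by linarith [hm u, hm v]
        calc ‖f u - f v‖ ^ p * (m u + m v) ≤ L ^ p * (m u + m v) :=
              mul_le_mul_of_nonneg_right h2 h4
          _ ≤ L ^ p * ((1 + s) / s * m u) := by
              apply mul_le_mul_of_nonneg_left h3 (Real.rpow_nonneg hL.le p)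
      · simp [h]
    calc B ≤ ∑ u, ∑ v, if G.Adj u v then L ^ p * ((1 + s) / s * m u) else 0 := by
          apply Finset.sum_le_sum; intro u _
          apply Finset.sum_le_sum; intro v _; exact hterm u v
      _ = ∑ u : V, ((univ.filter (fun v => G.Adj u v)).card : ℝ) *
            (L ^ p * ((1 + s) / s * m u)) := by
          apply Finset.sum_congr rfl; intro u _
          rw [← Finset.sum_filter, Finset.sum_const, nsmul_eq_mul]
      _ ≤ ∑ u : V, (K : ℝ) * (L ^ p * ((1 + s) / s * m u)) := by
          apply Finset.sum_le_sum; intro u _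
          apply mul_le_mul_of_nonneg_right
          · exact_mod_cast hdeg u
          · exact mul_nonneg (Real.rpow_nonneg hL.le p)
              (mul_nonneg (by positivity) (hm u).le)
      _ = (1 + s) / s * K * L ^ p * M := by
          rw [← Finset.mul_sum, hMdef, Finset.mul_sum, Finset.mul_sum]
          apply Finset.sum_congr rfl; intro u _; ring
  -- conclude
  have hgoal : ∑ u, ∑ v, ‖f u - f v‖ ^ p * (m u * m v) / M ^ 2 = A / M := by
    rw [hAdef, Finset.sum_div]
    apply Finset.sum_congr rfl; intro u _
    rw [Finset.sum_div]
    apply Finset.sum_congr rfl; intro v _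
    rw [div_div, sq]
  rw [hgoal]
  rw [div_le_div_iff₀ hMpos (by positivity : (0:ℝ) < s * c')]
  have h1 : c' * A ≤ (1 + s) / s * K * L ^ p * M := le_trans hmain hB
  have h2 := mul_le_mul_of_nonneg_left h1 hs0.le
  have h3 : s * ((1 + s) / s * K * L ^ p * M) = (1 + s) * K * L ^ p * M := by
    field_simp
  rw [h3] at h2
  calc A * (s * c') = s * (c' * A) := by ring
    _ ≤ (1 + s) * K * L ^ p * M := h2
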